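/- Let K ⊆ ℝ^N be a linear subspace of dimension N''. Then there exists a subset k ⊆ {1,…,N} of size N'' such that, with V := span(e_j : j ∈ k), the orthogonal projection q : K → V is a bijection whose inverse Γ : V → K is N-Lipschitz (with respect to the Euclidean norms). -/

import Mathlib

open Set
open scoped NNReal

noncomputable section

open Matrix in
private lemma aux_exists_det_ne_zero (N m : ℕ) (U : Matrix (Fin N) (Fin m) ℝ)
    (hinj : ∀ c : Fin m → ℝ, U *ᵥ c = 0 → c = 0) :
    ∃ r : Fin m → Fin N, (U.submatrix r id).det ≠ 0 := by
  classical
  have hcols : LinearIndependent ℝ (fun j => Uᵀ j) := by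
    rw [Fintype.linearIndependent_iff]
    intro c hc j
    have : U *ᵥ c = 0 := by
      funext i
      have := congrFun hc i
      simpa [Matrix.mulVec, dotProduct, Finset.sum_apply, mul_comm] using this
    exact congrFun (hinj c this) j
  have hrankT : (Uᵀ).rank = m := by
    have h := hcols.rank_matrix; simp only [Fintype.card_fin] at h; exact h
  have hrank : U.rank = m := by rw [← Matrix.rank_transpose]; exact hrankT
  have hspanrows : Submodule.span ℝ (Set.range (fun i => U i)) = ⊤ := by
    apply Submodule.eq_top_of_finrank_eq
    have := (Matrix.rank_eq_finrank_span_row U).symm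
    change Module.finrank ℝ (Submodule.span ℝ (Set.range (fun i => U i))) = U.rank at this
    simp only [this, hrank]
    simp
  obtain ⟨t, hts, htspan, htli⟩ := exists_linearIndependent ℝ (Set.range (fun i => U i))
  have htfin : t.Finite := htli.set_finite_of_isNoetherian
  haveI := htfin.fintype
  have hcardt : Fintype.card t = m := by
    have h1 := finrank_span_set_eq_card htli
    rw [htspan, hspanrows] at h1
    simp only [finrank_top] at h1
    rw [Set.toFinset_card] at h1
    simp at h1
    rw [Set.ncard_eq_toFinset_card' t, Set.toFinset_card] at h1
    omega
  let e : Fin m ≃ t := (Fintype.equivFinOfCardEq hcardt).symm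
  have hchoice : ∀ j : Fin m, ∃ i : Fin N, U i = (e j : Fin m → ℝ) := fun j => hts (e j).2
  choose r hr using hchoice
  refine ⟨r, ?_⟩
  have hli : LinearIndependent ℝ (fun j => (U.submatrix r id) j) := by
    have h2 : LinearIndependent ℝ (fun j : Fin m => ((e j : t) : Fin m → ℝ)) :=
      htli.comp e e.injective
    have heq : (fun j : Fin m => (U.submatrix r id) j) = fun j => ((e j : t) : Fin m → ℝ) := by
      funext j
      exact hr j
    rw [heq]
    exact h2
  have hU := Matrix.linearIndependent_rows_iff_isUnit.mp hli
  have := (Matrix.isUnit_iff_isUnit_det _).mp hU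
  exact isUnit_iff_ne_zero.mp this

private lemma aux_cramer (m : ℕ) (M : Matrix (Fin m) (Fin m) ℝ) (v : Fin m → ℝ) (j : Fin m) :
    ∑ l, v l * M.adjugate l j = (M.updateRow j v).det := by
  rw [← Matrix.cramer_transpose_apply, Matrix.cramer_eq_adjugate_mulVec,
    ← Matrix.adjugate_transpose]
  simp [Matrix.mulVec, dotProduct, Matrix.transpose_apply, mul_comm]

private lemma aux_bdd (N m : ℕ) (U : Matrix (Fin N) (Fin m) ℝ) (r : Fin m → Fin N)
    (hmax : ∀ s : Fin m → Fin N, |(U.submatrix s id).det| ≤ |(U.submatrix r id).det|)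
    (hdet : (U.submatrix r id).det ≠ 0) (i : Fin N) (j : Fin m) :
    |(U * (U.submatrix r id)⁻¹) i j| ≤ 1 := by
  classical
  set M := U.submatrix r id with hM
  have hentry : (U * M⁻¹) i j = (M.det)⁻¹ * ∑ l, U i l * M.adjugate l j := by
    rw [Matrix.inv_def, Ring.inverse_eq_inv']
    simp only [Matrix.mul_apply, Matrix.smul_apply, smul_eq_mul, Finset.mul_sum]
    congr 1
    funext l
    ring
  have hupd : M.updateRow j (fun l => U i l) = U.submatrix (Function.update r j i) id := by
    ext a l
    by_cases h : a = j
    · subst h; simp [Matrix.updateRow_apply, Function.update_apply]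
    · simp [Matrix.updateRow_apply, Function.update_apply, h, hM]
  have hsum : ∑ l, U i l * M.adjugate l j = (U.submatrix (Function.update r j i) id).det := by
    rw [aux_cramer m M (fun l => U i l) j, hupd]
  rw [hentry, hsum, abs_mul, abs_inv]
  have h1 : |(U.submatrix (Function.update r j i) id).det| ≤ |M.det| := hmax _
  have h2 : (0:ℝ) < |M.det| := abs_pos.mpr hdet
  rw [inv_mul_le_iff₀ h2, mul_one]
  exact h1

set_option maxHeartbeats 1000000 in
open Matrix in
/-- for every linear subspace `K ⊆ ℝ^N` of dimension `N''` there is a set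
`k` of `N''` coordinates such that the coordinate (orthogonal) projection `q` onto
`V = span(e_j : j ∈ k)` restricted to `K` has an `N`-Lipschitz inverse `Γ : V → K`. -/
theorem exists_lipschitz_coordinate_parametrization (N N'' : ℕ)
    (K : Submodule ℝ (EuclideanSpace ℝ (Fin N)))
    (hK : Module.finrank ℝ K = N'') :
    ∃ k : Finset (Fin N), k.card = N'' ∧
      ∃ Γ : EuclideanSpace ℝ (Fin N) → EuclideanSpace ℝ (Fin N),
        (∀ v, Γ v ∈ K) ∧
        LipschitzWith (N : ℝ≥0) Γ ∧
        (∀ x ∈ K, Γ (WithLp.toLp 2 (fun i => if i ∈ k then x i else 0 : Fin N → ℝ) :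
            EuclideanSpace ℝ (Fin N)) = x) ∧
        (∀ v : EuclideanSpace ℝ (Fin N), (∀ i, i ∉ k → v i = 0) →
            ∀ i ∈ k, Γ v i = v i) := by
  classical
  have hmN : N'' ≤ N := by rw [← hK]; simpa using Submodule.finrank_le K
  let b : OrthonormalBasis (Fin N'') ℝ K :=
    (stdOrthonormalBasis ℝ K).reindex (finCongr hK)
  set u : Fin N'' → EuclideanSpace ℝ (Fin N) := fun j => (b j : EuclideanSpace ℝ (Fin N))
    with hu_def
  have huK : ∀ j, u j ∈ K := fun j => (b j).2
  have hu_li : LinearIndependent ℝ u := by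
    have h1 : LinearIndependent ℝ (fun j : Fin N'' => b j) :=
      b.orthonormal.linearIndependent
    exact h1.map' K.subtype K.ker_subtype
  set U : Matrix (Fin N) (Fin N'') ℝ := Matrix.of (fun i (j : Fin N'') => u j i) with hU_def
  have hEval : ∀ (c : Fin N'' → ℝ) (i : Fin N), (∑ j, c j • u j) i = (U *ᵥ c) i := by
    intro c i
    have h1 : (∑ j, c j • u j) i = ∑ j, c j * u j i := by
      induction (Finset.univ : Finset (Fin N'')) using Finset.induction with
      | empty => rfl
      | insert _ _ h ih => rw [Finset.sum_insert h, Finset.sum_insert h, ← ih]; rfl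
    rw [h1]
    exact Finset.sum_congr rfl fun j _ => mul_comm _ _
  have hrep : ∀ x, x ∈ K → ∃ c : Fin N'' → ℝ, ∀ i, x i = (U *ᵥ c) i := by
    intro x hx
    refine ⟨fun j => b.repr ⟨x, hx⟩ j, fun i => ?_⟩
    have hsum := b.sum_repr ⟨x, hx⟩
    have h3 : x = ∑ j, b.repr ⟨x, hx⟩ j • u j := by
      conv_lhs => rw [show x = (K.subtype ⟨x, hx⟩ : EuclideanSpace ℝ (Fin N)) from rfl, ← hsum]
      rw [map_sum]
      exact Finset.sum_congr rfl fun j _ => rfl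
    have h4 := congrArg (fun z : EuclideanSpace ℝ (Fin N) => z i) h3
    exact h4.trans (hEval _ i)
  have hUinj : ∀ c : Fin N'' → ℝ, U *ᵥ c = 0 → c = 0 := by
    intro c hc
    have h1 : ∑ j, c j • u j = 0 := by
      ext i
      rw [hEval c i, hc]
      rfl
    have h2 := Fintype.linearIndependent_iff.mp hu_li c h1
    funext j
    exact h2 j
  obtain ⟨r0, hr0⟩ := aux_exists_det_ne_zero N N'' U hUinj
  obtain ⟨r, -, hrmax⟩ := Finset.exists_max_image Finset.univ
    (fun s : Fin N'' → Fin N => |(U.submatrix s id).det|) ⟨r0, Finset.mem_univ _⟩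
  have hrmax' : ∀ s, |(U.submatrix s id).det| ≤ |(U.submatrix r id).det| :=
    fun s => hrmax s (Finset.mem_univ _)
  set M := U.submatrix r id with hM_def
  have hdetM : M.det ≠ 0 := by
    intro h
    apply hr0
    have h1 := hrmax' r0
    rw [hM_def] at h1  -- no-op, just in case
    rw [h, abs_zero] at h1
    exact abs_nonpos_iff.mp h1
  have hdetU : IsUnit M.det := isUnit_iff_ne_zero.mpr hdetM
  have hrinj : Function.Injective r := by
    intro a c hac
    by_contra hne
    refine hdetM (Matrix.det_zero_of_row_eq hne ?_)
    funext l
    simp [hM_def, Matrix.submatrix_apply, hac]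
  set k := Finset.image r Finset.univ with hk_def
  have hkcard : k.card = N'' := by
    rw [hk_def, Finset.card_image_of_injective _ hrinj, Finset.card_univ, Fintype.card_fin]
  have hmemk : ∀ j, r j ∈ k := fun j => Finset.mem_image_of_mem r (Finset.mem_univ j)
  set Γ : EuclideanSpace ℝ (Fin N) → EuclideanSpace ℝ (Fin N) :=
    fun v => ∑ j, (M⁻¹ *ᵥ (fun l => v (r l))) j • u j with hΓ_def
  have hΓmem : ∀ v, Γ v ∈ K := fun v =>
    Submodule.sum_mem K fun j _ => Submodule.smul_mem K _ (huK j)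
  have hΓeval : ∀ v i, Γ v i = (U *ᵥ (M⁻¹ *ᵥ (fun l => v (r l)))) i := fun v i => hEval _ i
  have hΓkey : ∀ v i, Γ v i = ∑ j, (U * M⁻¹) i j * v (r j) := by
    intro v i
    rw [hΓeval, Matrix.mulVec_mulVec]
    rfl
  have hBdd := aux_bdd N N'' U r hrmax' hdetM
  have hMinvM : ∀ c : Fin N'' → ℝ, M⁻¹ *ᵥ (M *ᵥ c) = c := by
    intro c
    rw [Matrix.mulVec_mulVec, Matrix.nonsing_inv_mul M hdetU, Matrix.one_mulVec]
  have hMMinv : ∀ w : Fin N'' → ℝ, M *ᵥ (M⁻¹ *ᵥ w) = w := by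
    intro w
    rw [Matrix.mulVec_mulVec, Matrix.mul_nonsing_inv M hdetU, Matrix.one_mulVec]
  -- the norm bound
  have hnorm : ∀ v : EuclideanSpace ℝ (Fin N), ‖Γ v‖ ≤ (N : ℝ) * ‖v‖ := by
    intro v
    have habs : ∀ i, |Γ v i| ≤ ∑ j, |v (r j)| := by
      intro i
      rw [hΓkey]
      refine (Finset.abs_sum_le_sum_abs _ _).trans ?_
      refine Finset.sum_le_sum fun j _ => ?_
      rw [abs_mul]
      exact mul_le_of_le_one_left (abs_nonneg _) (hBdd i j)
    have hsq : ∀ i, (Γ v i) ^ 2 ≤ (N'' : ℝ) * ∑ j, (v (r j)) ^ 2 := by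
      intro i
      have h1 : (Γ v i) ^ 2 ≤ (∑ j, |v (r j)|) ^ 2 := by
        rw [← sq_abs]
        exact pow_le_pow_left₀ (abs_nonneg _) (habs i) 2
      refine h1.trans ?_
      have h2 := sq_sum_le_card_mul_sum_sq (s := (Finset.univ : Finset (Fin N'')))
        (f := fun j => |v (r j)|)
      simpa [sq_abs] using h2
    have hsub : ∑ j, (v (r j)) ^ 2 ≤ ∑ i, (v i) ^ 2 := by
      have h1 : ∑ i ∈ k, (v i) ^ 2 = ∑ j, (v (r j)) ^ 2 := by
        rw [hk_def]
        exact Finset.sum_image (fun a _ c _ h => hrinj h)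
      rw [← h1]
      exact Finset.sum_le_sum_of_subset_of_nonneg (Finset.subset_univ k)
        (fun i _ _ => sq_nonneg _)
    have hsum : ∑ i, (Γ v i) ^ 2 ≤ (N : ℝ) ^ 2 * ∑ i, (v i) ^ 2 := by
      calc ∑ i, (Γ v i) ^ 2 ≤ ∑ _i : Fin N, ((N'' : ℝ) * ∑ j, (v (r j)) ^ 2) :=
            Finset.sum_le_sum fun i _ => hsq i
        _ = (N : ℝ) * ((N'' : ℝ) * ∑ j, (v (r j)) ^ 2) := by
            rw [Finset.sum_const, Finset.card_univ, Fintype.card_fin, nsmul_eq_mul]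
        _ ≤ (N : ℝ) * ((N : ℝ) * ∑ i, (v i) ^ 2) := by
            have hnn : (0:ℝ) ≤ ∑ j, (v (r j)) ^ 2 :=
              Finset.sum_nonneg fun j _ => sq_nonneg _
            refine mul_le_mul_of_nonneg_left ?_ (Nat.cast_nonneg N)
            refine mul_le_mul (by exact_mod_cast hmN) hsub hnn (Nat.cast_nonneg N)
        _ = (N : ℝ) ^ 2 * ∑ i, (v i) ^ 2 := by ring
    have hne : ‖Γ v‖ = Real.sqrt (∑ i, (Γ v i) ^ 2) := by
      rw [EuclideanSpace.norm_eq]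
      congr 1
      refine Finset.sum_congr rfl fun i _ => ?_
      rw [Real.norm_eq_abs, sq_abs]
    have hne2 : ‖v‖ = Real.sqrt (∑ i, (v i) ^ 2) := by
      rw [EuclideanSpace.norm_eq]
      congr 1
      refine Finset.sum_congr rfl fun i _ => ?_
      rw [Real.norm_eq_abs, sq_abs]
    rw [hne, hne2]
    calc Real.sqrt (∑ i, (Γ v i) ^ 2) ≤ Real.sqrt ((N : ℝ) ^ 2 * ∑ i, (v i) ^ 2) :=
          Real.sqrt_le_sqrt hsum
      _ = (N : ℝ) * Real.sqrt (∑ i, (v i) ^ 2) := by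
          rw [Real.sqrt_mul (sq_nonneg _), Real.sqrt_sq (Nat.cast_nonneg N)]
  have hlip : LipschitzWith (N : ℝ≥0) Γ := by
    apply LipschitzWith.of_dist_le_mul
    intro x y
    rw [dist_eq_norm, dist_eq_norm]
    have hsubxy : Γ x - Γ y = Γ (x - y) := by
      ext i
      show Γ x i - Γ y i = Γ (x - y) i
      rw [hΓkey, hΓkey, hΓkey, ← Finset.sum_sub_distrib]
      refine Finset.sum_congr rfl fun j _ => ?_
      show (U * M⁻¹) i j * x (r j) - (U * M⁻¹) i j * y (r j)
        = (U * M⁻¹) i j * (x (r j) - y (r j))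
      ring
    rw [hsubxy]
    have := hnorm (x - y)
    simpa using this
  refine ⟨k, hkcard, Γ, hΓmem, hlip, ?_, ?_⟩
  · intro x hx
    obtain ⟨c, hc⟩ := hrep x hx
    have h5 := hΓeval (WithLp.toLp 2 (fun i => if i ∈ k then x i else 0 : Fin N → ℝ) :
        EuclideanSpace ℝ (Fin N))
    have hvr : (fun l => ((WithLp.toLp 2 (fun i => if i ∈ k then x i else 0 : Fin N → ℝ) :
        EuclideanSpace ℝ (Fin N))) (r l)) = M *ᵥ c := by
      funext l
      show (if r l ∈ k then x (r l) else 0) = (M *ᵥ c) l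
      rw [if_pos (hmemk l)]
      exact hc (r l)
    rw [hvr, hMinvM c] at h5
    ext i
    exact (h5 i).trans (hc i).symm
  · intro v _ i hik
    obtain ⟨j0, _, hj0⟩ := Finset.mem_image.mp hik
    subst hj0
    have h5 := hΓeval v (r j0)
    have h6 : (U *ᵥ (M⁻¹ *ᵥ fun l => v (r l))) (r j0) = v (r j0) := by
      show (M *ᵥ (M⁻¹ *ᵥ fun l => v (r l))) j0 = v (r j0)
      rw [hMMinv]
    exact h5.trans h6
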